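/- The subgroup of Aut(IS_n, *) consisting of all automorphisms π with π(a) ∼ a for all a ∈ IS_n is a normal subgroup of Aut(IS_n, *). -/

import Mathlib

open Equiv

/-- `IS n` : the symmetric inverse semigroup on `{1,…,n}`, modeled as partial
equivalences of `Fin n`.  Composition is left-to-right: `(x.trans y) t = y (x t)`. -/
abbrev IS (n : ℕ) := PEquiv (Fin n) (Fin n)

/-- The domain of a partial injective transformation. -/
def sdom {n : ℕ} (x : IS n) : Set (Fin n) := {a | (x a).isSome}

/-- The image of a partial injective transformation. -/
def sim {n : ℕ} (x : IS n) : Set (Fin n) := {b | (x.symm b).isSome}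

/-- The rank of a partial injective transformation: the cardinality of its image. -/
noncomputable def srank {n : ℕ} (x : IS n) : ℕ := Nat.card (sim x)

/-- The set `A = {1,…,k}` inside `Fin n`, i.e. the first `k` elements. -/
def SetA (n k : ℕ) : Set (Fin n) := {i | (i : ℕ) < k}

/-- The idempotent `e` acting identically on `A`, with `dom e = im e = A`. -/
def sandE (n k : ℕ) : IS n where
  toFun i := if (i : ℕ) < k then some i else none
  invFun i := if (i : ℕ) < k then some i else none
  inv a b := by
    try dsimp only
    split_ifs with h1 h2 <;>
      simp_all [Option.mem_def, eq_comm] <;> rintro rfl <;> omega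

/-- The sandwich multiplication `x * y = x e y` (left-to-right composition). -/
def smul (n k : ℕ) (x y : IS n) : IS n := (x.trans (sandE n k)).trans y

/-- `a` is decomposable in `(IS_n, *)` if `a = b * c` for some `b, c`. -/
def Decomp (n k : ℕ) (a : IS n) : Prop := ∃ b c : IS n, smul n k b c = a

/-- `M₁(a) = {x ∈ dom a : x ∈ A, a x ∈ A}`. -/
def M1 (n k : ℕ) (a : IS n) : Set (Fin n) :=
  {x | x ∈ SetA n k ∧ ∃ y ∈ SetA n k, a x = some y}

/-- `M₂(a) = {x ∈ dom a : x ∈ A, a x ∈ Ā}`. -/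
def M2 (n k : ℕ) (a : IS n) : Set (Fin n) :=
  {x | x ∈ SetA n k ∧ ∃ y, y ∉ SetA n k ∧ a x = some y}

/-- `M₃(a) = {x ∈ dom a : x ∈ Ā, a x ∈ A}`. -/
def M3 (n k : ℕ) (a : IS n) : Set (Fin n) :=
  {x | x ∉ SetA n k ∧ ∃ y ∈ SetA n k, a x = some y}

/-- The relation `∼` : for indecomposable `a, b`, `a ∼ b` iff `Mᵢ(a) = Mᵢ(b)` for
`i = 1,2,3` and `a x = b x` on `M₁(a) ∪ M₂(a) ∪ M₃(a)`; if `a` or `b` is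
decomposable, `a ∼ b` iff `a = b`. -/
def SimRel (n k : ℕ) (a b : IS n) : Prop :=
  (¬ Decomp n k a ∧ ¬ Decomp n k b ∧ M1 n k a = M1 n k b ∧ M2 n k a = M2 n k b ∧
    M3 n k a = M3 n k b ∧ ∀ x ∈ M1 n k a ∪ M2 n k a ∪ M3 n k a, a x = b x)
  ∨ ((Decomp n k a ∨ Decomp n k b) ∧ a = b)

lemma sandE_apply (n k : ℕ) (x : Fin n) :
    sandE n k x = if (x : ℕ) < k then some x else none := rfl

lemma trans_apply' {n : ℕ} (f g : IS n) (x : Fin n) :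
    (f.trans g) x = (f x).bind g := rfl

/-- The `M`-data agreement is equivalent to agreement of `e ∘ a` and `a ∘ e`. -/
lemma qrel_iff (n k : ℕ) (a b : IS n) :
    (M1 n k a = M1 n k b ∧ M2 n k a = M2 n k b ∧ M3 n k a = M3 n k b ∧
      ∀ x ∈ M1 n k a ∪ M2 n k a ∪ M3 n k a, a x = b x) ↔
    ((sandE n k).trans a = (sandE n k).trans b ∧
      a.trans (sandE n k) = b.trans (sandE n k)) := by
  constructor
  · rintro ⟨h1, h2, h3, hv⟩
    have claim1 : ∀ x : Fin n, (x : ℕ) < k → a x = b x := by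
      intro x hx
      rcases ha : a x with _ | y
      · rcases hb : b x with _ | y
        · rfl
        · by_cases hy : (y : ℕ) < k
          · have hm : x ∈ M1 n k b := ⟨hx, y, hy, hb⟩
            rw [← h1] at hm
            obtain ⟨-, z, -, hz⟩ := hm
            rw [ha] at hz; exact absurd hz (by simp)
          · have hm : x ∈ M2 n k b := ⟨hx, y, hy, hb⟩
            rw [← h2] at hm
            obtain ⟨-, z, -, hz⟩ := hm
            rw [ha] at hz; exact absurd hz (by simp)
      · by_cases hy : (y : ℕ) < k
        · rw [← ha]; exact hv x (Or.inl (Or.inl ⟨hx, y, hy, ha⟩))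
        · rw [← ha]; exact hv x (Or.inl (Or.inr ⟨hx, y, hy, ha⟩))
    have claim2 : ∀ x y : Fin n, (y : ℕ) < k → (a x = some y ↔ b x = some y) := by
      intro x y hy
      by_cases hx : (x : ℕ) < k
      · rw [claim1 x hx]
      · constructor
        · intro h
          have hm : x ∈ M3 n k a := ⟨hx, y, hy, h⟩
          rw [← hv x (Or.inr hm)]; exact h
        · intro h
          have hm : x ∈ M3 n k b := ⟨hx, y, hy, h⟩
          rw [← h3] at hm
          rw [hv x (Or.inr hm)]; exact h
    constructor
    · apply PEquiv.ext; intro x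
      rw [trans_apply', trans_apply', sandE_apply]
      by_cases hx : (x : ℕ) < k
      · rw [if_pos hx]; simp [claim1 x hx]
      · rw [if_neg hx]; rfl
    · apply PEquiv.ext; intro x
      rw [trans_apply', trans_apply']
      rcases ha : a x with _ | y <;> rcases hb : b x with _ | z
      · rfl
      · by_cases hz : (z : ℕ) < k
        · rw [← claim2 x z hz] at hb; rw [ha] at hb; exact absurd hb (by simp)
        · simp [sandE_apply, hz]
      · by_cases hy : (y : ℕ) < k
        · rw [claim2 x y hy] at ha; rw [hb] at ha; exact absurd ha (by simp)
        · simp [sandE_apply, hy]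
      · by_cases hy : (y : ℕ) < k
        · have := (claim2 x y hy).mp ha
          rw [hb] at this
          rw [Option.some_inj] at this
          rw [this]
        · by_cases hz : (z : ℕ) < k
          · have := (claim2 x z hz).mpr hb
            rw [ha] at this
            rw [Option.some_inj] at this
            exact absurd hz (this ▸ hy)
          · simp [sandE_apply, hy, hz]
  · rintro ⟨he, hte⟩
    have claim1 : ∀ x : Fin n, (x : ℕ) < k → a x = b x := by
      intro x hx
      have h : ((sandE n k).trans a) x = ((sandE n k).trans b) x := by rw [he]
      rw [trans_apply', trans_apply', sandE_apply, if_pos hx] at h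
      simpa using h
    have claim2 : ∀ x y : Fin n, (y : ℕ) < k → (a x = some y ↔ b x = some y) := by
      intro x y hy
      have h : (a.trans (sandE n k)) x = (b.trans (sandE n k)) x := by rw [hte]
      rw [trans_apply', trans_apply'] at h
      constructor
      · intro hs
        rw [hs] at h
        simp only [Option.bind_some, sandE_apply, if_pos hy] at h
        rcases hb : b x with _ | z
        · rw [hb] at h; exact absurd h (by simp)
        · rw [hb] at h
          simp only [Option.bind_some, sandE_apply] at h
          by_cases hz : (z : ℕ) < k
          · rw [if_pos hz, Option.some_inj] at h; exact congrArg some h.symm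
          · rw [if_neg hz] at h; exact absurd h (by simp)
      · intro hs
        rw [hs] at h
        simp only [Option.bind_some, sandE_apply, if_pos hy] at h
        rcases ha : a x with _ | z
        · rw [ha] at h; exact absurd h (by simp)
        · rw [ha] at h
          simp only [Option.bind_some, sandE_apply] at h
          by_cases hz : (z : ℕ) < k
          · rw [if_pos hz, Option.some_inj] at h; exact congrArg some h
          · rw [if_neg hz] at h; exact absurd h.symm (by simp)
    refine ⟨?_, ?_, ?_, ?_⟩
    · ext x
      simp only [M1, SetA, Set.mem_setOf_eq]
      constructor
      · rintro ⟨hx, y, hy, hxy⟩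
        exact ⟨hx, y, hy, by rw [← claim1 x hx]; exact hxy⟩
      · rintro ⟨hx, y, hy, hxy⟩
        exact ⟨hx, y, hy, by rw [claim1 x hx]; exact hxy⟩
    · ext x
      simp only [M2, SetA, Set.mem_setOf_eq]
      constructor
      · rintro ⟨hx, y, hy, hxy⟩
        exact ⟨hx, y, hy, by rw [← claim1 x hx]; exact hxy⟩
      · rintro ⟨hx, y, hy, hxy⟩
        exact ⟨hx, y, hy, by rw [claim1 x hx]; exact hxy⟩
    · ext x
      simp only [M3, SetA, Set.mem_setOf_eq]
      constructor
      · rintro ⟨hx, y, hy, hxy⟩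
        exact ⟨hx, y, hy, (claim2 x y hy).mp hxy⟩
      · rintro ⟨hx, y, hy, hxy⟩
        exact ⟨hx, y, hy, (claim2 x y hy).mpr hxy⟩
    · intro x hx
      rcases hx with (h | h) | h
      · exact claim1 x h.1
      · exact claim1 x h.1
      · obtain ⟨hx', y, hy, hxy⟩ := h
        rw [hxy, ((claim2 x y hy).mp hxy)]

/-- the subgroup of `Aut(IS_n, *)` of automorphisms `π` with
`π a ∼ a` for all `a` is normal in `Aut(IS_n, *)`: it is stable under
conjugation by any automorphism. -/
theorem simRel_subgroup_normal (n k : ℕ) (hk : 1 ≤ k) (hkn : k ≤ n)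
    (σ π : Equiv.Perm (IS n))
    (hσ : ∀ x y : IS n, σ (smul n k x y) = smul n k (σ x) (σ y))
    (hπaut : ∀ x y : IS n, π (smul n k x y) = smul n k (π x) (π y))
    (hπ : ∀ a, SimRel n k (π a) a) :
    ∀ a : IS n, SimRel n k ((σ * π * σ⁻¹) a) a := by
  intro a
  have hσinv : ∀ x y : IS n, σ⁻¹ (smul n k x y) = smul n k (σ⁻¹ x) (σ⁻¹ y) := by
    intro x y
    apply σ.injective
    rw [hσ]
    simp [Equiv.apply_symm_apply]
  have hdec : ∀ x, Decomp n k x → Decomp n k (σ x) := by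
    rintro x ⟨u, v, h⟩
    exact ⟨σ u, σ v, by rw [← hσ, h]⟩
  have hdec' : ∀ x, Decomp n k x → Decomp n k (σ⁻¹ x) := by
    rintro x ⟨u, v, h⟩
    exact ⟨σ⁻¹ u, σ⁻¹ v, by rw [← hσinv, h]⟩
  have hconj : (σ * π * σ⁻¹) a = σ (π (σ⁻¹ a)) := rfl
  set b := σ⁻¹ a with hb_def
  have hσb : σ b = a := Equiv.apply_symm_apply σ a
  by_cases hb : Decomp n k b
  · have ha : Decomp n k a := by
      have := hdec b hb
      rwa [hσb] at this
    have hπb : π b = b := by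
      rcases hπ b with ⟨-, h2, -⟩ | ⟨-, h⟩
      · exact absurd hb h2
      · exact h
    right
    refine ⟨Or.inr ha, ?_⟩
    rw [hconj, hπb, hσb]
  · have ha : ¬ Decomp n k a := by
      intro h
      apply hb
      have := hdec' a h
      rwa [← hb_def] at this
    have hL : ¬ Decomp n k (π b) ∧ M1 n k (π b) = M1 n k b ∧ M2 n k (π b) = M2 n k b ∧
        M3 n k (π b) = M3 n k b ∧
        ∀ x ∈ M1 n k (π b) ∪ M2 n k (π b) ∪ M3 n k (π b), (π b) x = b x := by
      rcases hπ b with ⟨h1, -, h3, h4, h5, h6⟩ | ⟨hd, h⟩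
      · exact ⟨h1, h3, h4, h5, h6⟩
      · exfalso
        rcases hd with hd | hd
        · rw [h] at hd; exact hb hd
        · exact hb hd
    obtain ⟨hdπb, hM1, hM2, hM3, hval⟩ := hL
    have hQ := (qrel_iff n k (π b) b).mp ⟨hM1, hM2, hM3, hval⟩
    -- products with `π b` and `b` agree
    have hsl : ∀ x, smul n k x (π b) = smul n k x b := by
      intro x
      unfold smul
      rw [PEquiv.trans_assoc, PEquiv.trans_assoc, hQ.1]
    have hsr : ∀ x, smul n k (π b) x = smul n k b x := by
      intro x
      unfold smul
      rw [hQ.2]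
    set r : IS n := PEquiv.refl (Fin n) with hr
    have hsmul_left : ∀ c : IS n, smul n k r c = (sandE n k).trans c := by
      intro c
      unfold smul
      rw [PEquiv.refl_trans]
    have hsmul_right : ∀ c : IS n, smul n k c r = c.trans (sandE n k) := by
      intro c
      unfold smul
      rw [PEquiv.trans_refl]
    have key1 : (sandE n k).trans (σ (π b)) = (sandE n k).trans a := by
      rw [← hσb, ← hsmul_left, ← hsmul_left]
      calc smul n k r (σ (π b)) = σ (smul n k (σ⁻¹ r) (π b)) := by
            rw [hσ]; simp [Equiv.apply_symm_apply]
        _ = σ (smul n k (σ⁻¹ r) b) := by rw [hsl]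
        _ = smul n k r (σ b) := by rw [hσ]; simp [Equiv.apply_symm_apply]
    have key2 : (σ (π b)).trans (sandE n k) = a.trans (sandE n k) := by
      rw [← hσb, ← hsmul_right, ← hsmul_right]
      calc smul n k (σ (π b)) r = σ (smul n k (π b) (σ⁻¹ r)) := by
            rw [hσ]; simp [Equiv.apply_symm_apply]
        _ = σ (smul n k b (σ⁻¹ r)) := by rw [hsr]
        _ = smul n k (σ b) r := by rw [hσ]; simp [Equiv.apply_symm_apply]
    have hindec : ¬ Decomp n k (σ (π b)) := by
      intro h
      apply hdπb
      have := hdec' _ h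
      rwa [Equiv.Perm.coe_inv, Equiv.symm_apply_apply] at this
    obtain ⟨q1, q2, q3, q4⟩ := (qrel_iff n k (σ (π b)) a).mpr ⟨key1, key2⟩
    left
    rw [hconj]
    exact ⟨hindec, ha, q1, q2, q3, q4⟩
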